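/- Let {M_{(t₁,…,tₙ)}} be a consistent family of normalized finitely additive L(H)-valued measures over a family (Λ_t, F_t)_{t∈T} of nonempty sets with algebras of subsets. Then there exists a unique normalized finitely additive L(H)-valued measure 𝕄 on the algebra A_Λ of cylinder sets of Λ = Π_{t∈T} Λ_t such that 𝕄(π_{(t₁,…,tₙ)}⁻¹(F)) = M_{(t₁,…,tₙ)}(F) for every finite tuple of distinct indices t₁,…,tₙ ∈ T and every F in the product algebra on Λ_{t₁} × ⋯ × Λ_{tₙ}. -/

import Mathlib

open scoped BigOperators

/-- An algebra of subsets of a set `α`. -/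
structure SetAlgebra (α : Type*) where
  sets : Set (Set α)
  univ_mem : Set.univ ∈ sets
  compl_mem : ∀ ⦃s : Set α⦄, s ∈ sets → sᶜ ∈ sets
  union_mem : ∀ ⦃s t : Set α⦄, s ∈ sets → t ∈ sets → s ∪ t ∈ sets

/-- The algebra of subsets of `α` generated by a collection `G` of subsets:
the smallest collection containing `G` and `univ` and closed under complements
and finite unions. -/
inductive GenAlg {α : Type*} (G : Set (Set α)) : Set α → Prop
  | basic {s : Set α} : s ∈ G → GenAlg G s
  | univ : GenAlg G Set.univ
  | compl {s : Set α} : GenAlg G s → GenAlg G sᶜ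
  | union {s t : Set α} : GenAlg G s → GenAlg G t → GenAlg G (s ∪ t)

/-- The product algebra on `Π i, Λ i`: the algebra of subsets generated by the
rectangles `B₁ × ⋯ × Bₙ` with measurable sides `Bᵢ ∈ Fᵢ`. -/
def prodAlgebra {ι : Type*} {Λ : ι → Type*} (F : ∀ i, SetAlgebra (Λ i)) :
    Set (Set (∀ i, Λ i)) :=
  {S | GenAlg {R | ∃ B : ∀ i, Set (Λ i), (∀ i, B i ∈ (F i).sets) ∧ R = Set.univ.pi B} S}

/-- The collection `A_Λ` of all cylinder sets of `Λ = Π_{t∈T} Λ_t`: sets of the form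
`π_{(t₁,…,tₙ)}⁻¹(F)` for distinct indices `t₁,…,tₙ ∈ T` and `F` in the product algebra
on `Λ_{t₁} × ⋯ × Λ_{tₙ}`. -/
def cylinderSets {T : Type*} (Λ : T → Type*) (F : ∀ t, SetAlgebra (Λ t)) :
    Set (Set (∀ t, Λ t)) :=
  {A | ∃ (n : ℕ) (t : Fin n → T), Function.Injective t ∧
        ∃ Fs ∈ prodAlgebra (fun j => F (t j)),
          A = (fun (x : ∀ s, Λ s) (j : Fin n) => x (t j)) ⁻¹' Fs}

/-- A consistent family of normalized finitely additive `L(H)`-valued measures: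
to each finite tuple `(t₁,…,tₙ)` of distinct indices in `T` it assigns a normalized
finitely additive measure `M (t₁,…,tₙ)` on the product algebra on `Λ_{t₁} × ⋯ × Λ_{tₙ}`,
and these measures satisfy the consistency conditions (a) (permutation invariance on
rectangles) and (b) (marginal compatibility for subtuples). -/
structure ConsistentFamily {T : Type*} (Λ : T → Type*) (F : ∀ t, SetAlgebra (Λ t))
    (H : Type*) [NormedAddCommGroup H] [InnerProductSpace ℂ H] [CompleteSpace H] where
  M : ∀ {n : ℕ} (t : Fin n → T), Set (∀ j : Fin n, Λ (t j)) → (H →L[ℂ] H)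
  normalized : ∀ {n : ℕ} (t : Fin n → T), Function.Injective t → M t Set.univ = 1
  additive : ∀ {n : ℕ} (t : Fin n → T), Function.Injective t →
    ∀ ⦃A B : Set (∀ j : Fin n, Λ (t j))⦄, A ∈ prodAlgebra (fun j => F (t j)) →
      B ∈ prodAlgebra (fun j => F (t j)) → Disjoint A B → M t (A ∪ B) = M t A + M t B
  perm : ∀ {n : ℕ} (t : Fin n → T), Function.Injective t → ∀ (σ : Equiv.Perm (Fin n))
    (B : ∀ j : Fin n, Set (Λ (t j))), (∀ j, B j ∈ (F (t j)).sets) →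
    M t (Set.univ.pi B) = M (fun j => t (σ j)) (Set.univ.pi fun j => B (σ j))
  marginal : ∀ {n k : ℕ} (t : Fin n → T), Function.Injective t →
    ∀ (ι : Fin k → Fin n), StrictMono ι →
    ∀ (Fs : Set (∀ j : Fin k, Λ (t (ι j)))), Fs ∈ prodAlgebra (fun j => F (t (ι j))) →
    M t {x : ∀ j : Fin n, Λ (t j) | (fun j => x (ι j)) ∈ Fs} = M (fun j => t (ι j)) Fs


theorem SetAlgebra.inter_mem {α : Type*} (Fa : SetAlgebra α) {s t : Set α}
    (hs : s ∈ Fa.sets) (ht : t ∈ Fa.sets) : s ∩ t ∈ Fa.sets := by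
  have := Fa.compl_mem (Fa.union_mem (Fa.compl_mem hs) (Fa.compl_mem ht))
  simpa using this

namespace ExtAux

variable {n : ℕ} {A : Fin n → Type*}

theorem rect_mem (Fa : ∀ i, SetAlgebra (A i)) {B : ∀ i, Set (A i)}
    (hB : ∀ i, B i ∈ (Fa i).sets) : Set.univ.pi B ∈ prodAlgebra Fa :=
  GenAlg.basic ⟨B, hB, rfl⟩

theorem empty_mem (Fa : ∀ i, SetAlgebra (A i)) : (∅ : Set (∀ i, A i)) ∈ prodAlgebra Fa := by
  have h := GenAlg.compl (GenAlg.univ (G := {R | ∃ B : ∀ i, Set (A i),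
    (∀ i, B i ∈ (Fa i).sets) ∧ R = Set.univ.pi B}))
  simpa [prodAlgebra] using h

theorem prodAlgebra_partition (Fa : ∀ i, SetAlgebra (A i)) {S : Set (∀ i, A i)}
    (hS : S ∈ prodAlgebra Fa) :
    ∃ P : Finset (Set (∀ i, A i)),
      (∀ R ∈ P, ∃ B : ∀ i, Set (A i), (∀ i, B i ∈ (Fa i).sets) ∧ R = Set.univ.pi B) ∧
      (∀ R ∈ P, ∀ R' ∈ P, R ≠ R' → Disjoint R R') ∧
      ⋃₀ (P : Set (Set (∀ i, A i))) = Set.univ ∧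
      ∃ Q ⊆ P, S = ⋃₀ (Q : Set (Set (∀ i, A i))) := by
  classical
  induction hS with
  | @basic R hR =>
      obtain ⟨B, hB, rfl⟩ := hR
      refine ⟨Finset.image (fun f : Fin n → Bool =>
          Set.univ.pi fun i => if f i then B i else (B i)ᶜ) Finset.univ, ?_, ?_, ?_,
          {Set.univ.pi B}, ?_, by simp⟩
      · intro R hR
        simp only [Finset.mem_image, Finset.mem_univ, true_and] at hR
        obtain ⟨f, rfl⟩ := hR
        exact ⟨_, fun i => by by_cases h : f i <;> simp [h, hB i, (Fa i).compl_mem (hB i)], rfl⟩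
      · intro R hR R' hR' hne
        simp only [Finset.mem_image, Finset.mem_univ, true_and] at hR hR'
        obtain ⟨f, rfl⟩ := hR
        obtain ⟨g, rfl⟩ := hR'
        have hfg : f ≠ g := fun h => hne (by rw [h])
        obtain ⟨i, hi⟩ := Function.ne_iff.mp hfg
        rw [Set.disjoint_left]
        intro x hx hx'
        have h1 := hx i (Set.mem_univ i)
        have h2 := hx' i (Set.mem_univ i)
        cases hf : f i <;> cases hg : g i <;>
          simp only [hf, hg, if_true, if_false, cond] at h1 h2 hi ⊢
        · exact hi rfl
        · exact h1 h2
        · exact h2 h1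
        · exact hi rfl
      · ext x
        simp only [Finset.coe_image, Finset.coe_univ, Set.image_univ, Set.mem_sUnion,
          Set.mem_range, Set.mem_univ, iff_true]
        refine ⟨_, ⟨fun i => if x i ∈ B i then true else false, rfl⟩, ?_⟩
        intro i _
        by_cases h : x i ∈ B i <;> simp [h]
      · simp only [Finset.singleton_subset_iff, Finset.mem_image, Finset.mem_univ, true_and]
        exact ⟨fun _ => true, by simp⟩
  | univ =>
      refine ⟨{Set.univ}, ?_, ?_, by simp, {Set.univ}, le_refl _, by simp⟩
      · intro R hR
        simp only [Finset.mem_singleton] at hR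
        subst hR
        exact ⟨fun _ => Set.univ, fun i => (Fa i).univ_mem, by simp⟩
      · intro R hR R' hR' hne
        simp only [Finset.mem_singleton] at hR hR'
        exact absurd (hR.trans hR'.symm) hne
  | compl hs ih =>
      obtain ⟨P, h1, h2, h3, Q, hQ, rfl⟩ := ih
      refine ⟨P, h1, h2, h3, P \ Q, Finset.sdiff_subset, ?_⟩
      ext x
      constructor
      · intro hx
        have hx' : x ∈ ⋃₀ (↑P : Set (Set (∀ i, A i))) := h3 ▸ Set.mem_univ x
        obtain ⟨R, hR, hxR⟩ := hx'
        have hRQ : R ∉ Q := fun h => hx ⟨R, h, hxR⟩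
        exact ⟨R, by simpa using ⟨hR, hRQ⟩, hxR⟩
      · rintro ⟨R, hR, hxR⟩
        simp only [Finset.coe_sdiff, Set.mem_diff, Finset.mem_coe] at hR
        rintro ⟨R', hR', hxR'⟩
        have hne : R ≠ R' := fun h => hR.2 (h ▸ hR')
        exact Set.disjoint_left.mp (h2 R (hR.1) R' (hQ hR') hne) hxR hxR'
  | union hs ht ihs iht =>
      obtain ⟨P, h1, h2, h3, Q, hQ, rfl⟩ := ihs
      obtain ⟨P', h1', h2', h3', Q', hQ', rfl⟩ := iht
      refine ⟨(P ×ˢ P').image (fun p => p.1 ∩ p.2), ?_, ?_, ?_,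
        (((P ×ˢ P').filter (fun p => p.1 ∈ Q ∨ p.2 ∈ Q')).image (fun p => p.1 ∩ p.2)),
        Finset.image_subset_image (Finset.filter_subset _ _), ?_⟩
      · intro R hR
        simp only [Finset.mem_image, Finset.mem_product] at hR
        obtain ⟨⟨a, b⟩, ⟨ha, hb⟩, rfl⟩ := hR
        obtain ⟨Ba, hBa, rfl⟩ := h1 a ha
        obtain ⟨Bb, hBb, rfl⟩ := h1' b hb
        exact ⟨fun i => Ba i ∩ Bb i, fun i => (Fa i).inter_mem (hBa i) (hBb i),
          (Set.pi_inter_distrib).symm⟩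
      · intro R hR R' hR' hne
        simp only [Finset.mem_image, Finset.mem_product] at hR hR'
        obtain ⟨⟨a, b⟩, ⟨ha, hb⟩, rfl⟩ := hR
        obtain ⟨⟨c, d⟩, ⟨hc, hd⟩, rfl⟩ := hR'
        by_cases hac : a = c
        · subst hac
          have hbd : b ≠ d := fun h => hne (by rw [h])
          exact Disjoint.mono Set.inter_subset_right Set.inter_subset_right
            (h2' b hb d hd hbd)
        · exact Disjoint.mono Set.inter_subset_left Set.inter_subset_left
            (h2 a ha c hc hac)
      · ext x
        simp only [Set.mem_sUnion, Set.mem_univ, iff_true, Finset.coe_image, Set.mem_image,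
          Finset.mem_coe, Finset.mem_product]
        have hx1 : x ∈ ⋃₀ (↑P : Set (Set (∀ i, A i))) := h3 ▸ Set.mem_univ x
        have hx2 : x ∈ ⋃₀ (↑P' : Set (Set (∀ i, A i))) := h3' ▸ Set.mem_univ x
        obtain ⟨a, ha, hxa⟩ := hx1
        obtain ⟨b, hb, hxb⟩ := hx2
        exact ⟨a ∩ b, ⟨⟨a, b⟩, ⟨ha, hb⟩, rfl⟩, hxa, hxb⟩
      · ext x
        simp only [Set.mem_union, Set.mem_sUnion, Finset.coe_image, Set.mem_image,
          Finset.mem_coe, Finset.mem_filter, Finset.mem_product]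
        constructor
        · rintro (⟨a, ha, hxa⟩ | ⟨b, hb, hxb⟩)
          · have hx2 : x ∈ ⋃₀ (↑P' : Set (Set (∀ i, A i))) := h3' ▸ Set.mem_univ x
            obtain ⟨b, hb, hxb⟩ := hx2
            exact ⟨a ∩ b, ⟨⟨a, b⟩, ⟨⟨hQ ha, hb⟩, Or.inl ha⟩, rfl⟩, hxa, hxb⟩
          · have hx1 : x ∈ ⋃₀ (↑P : Set (Set (∀ i, A i))) := h3 ▸ Set.mem_univ x
            obtain ⟨a, ha, hxa⟩ := hx1
            exact ⟨a ∩ b, ⟨⟨a, b⟩, ⟨⟨ha, hQ' hb⟩, Or.inr hb⟩, rfl⟩, hxa, hxb⟩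
        · rintro ⟨R, ⟨⟨a, b⟩, ⟨⟨ha, hb⟩, hab⟩, rfl⟩, hxR⟩
          rcases hab with h | h
          · exact Or.inl ⟨a, h, hxR.1⟩
          · exact Or.inr ⟨b, h, hxR.2⟩

end ExtAux

namespace ExtAux

variable {n : ℕ} {A : Fin n → Type*}

theorem sUnion_mem (Fa : ∀ i, SetAlgebra (A i)) (Q : Finset (Set (∀ i, A i)))
    (h : ∀ R ∈ Q, R ∈ prodAlgebra Fa) : ⋃₀ (Q : Set (Set (∀ i, A i))) ∈ prodAlgebra Fa := by
  classical
  induction Q using Finset.induction_on with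
  | empty => simpa using empty_mem Fa
  | @insert R Q hR ih =>
      rw [Finset.coe_insert, Set.sUnion_insert]
      exact GenAlg.union (h R (Finset.mem_insert_self _ _))
        (ih fun R' hR' => h R' (Finset.mem_insert_of_mem hR'))

theorem additive_sum {E : Type*} [AddCommGroup E] (Fa : ∀ i, SetAlgebra (A i))
    {μ : Set (∀ i, A i) → E}
    (hμ : ∀ ⦃S S' : Set (∀ i, A i)⦄, S ∈ prodAlgebra Fa → S' ∈ prodAlgebra Fa →
      Disjoint S S' → μ (S ∪ S') = μ S + μ S')
    (Q : Finset (Set (∀ i, A i))) (hmem : ∀ R ∈ Q, R ∈ prodAlgebra Fa)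
    (hdisj : ∀ R ∈ Q, ∀ R' ∈ Q, R ≠ R' → Disjoint R R') :
    μ (⋃₀ (Q : Set (Set (∀ i, A i)))) = ∑ R ∈ Q, μ R := by
  classical
  have h0 : μ ∅ = 0 := by
    have := hμ (empty_mem Fa) (empty_mem Fa) (disjoint_bot_left)
    rw [Set.union_self] at this
    exact (left_eq_add.mp this)
  induction Q using Finset.induction_on with
  | empty => simpa using h0
  | @insert R Q hR ih =>
      rw [Finset.coe_insert, Set.sUnion_insert, Finset.sum_insert hR]
      have hd : Disjoint R (⋃₀ (Q : Set (Set (∀ i, A i)))) := by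
        rw [Set.disjoint_sUnion_right]
        intro R' hR'
        exact hdisj R (Finset.mem_insert_self _ _) R' (Finset.mem_insert_of_mem hR')
          (fun h => hR (h ▸ hR'))
      rw [hμ (hmem R (Finset.mem_insert_self _ _))
        (sUnion_mem Fa Q fun R' hR' => hmem R' (Finset.mem_insert_of_mem hR')) hd,
        ih (fun R' hR' => hmem R' (Finset.mem_insert_of_mem hR'))
          (fun R1 h1 R2 h2 => hdisj R1 (Finset.mem_insert_of_mem h1) R2
            (Finset.mem_insert_of_mem h2))]

theorem eq_on_prodAlgebra {E : Type*} [AddCommGroup E] (Fa : ∀ i, SetAlgebra (A i))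
    {μ ν : Set (∀ i, A i) → E}
    (hμ : ∀ ⦃S S' : Set (∀ i, A i)⦄, S ∈ prodAlgebra Fa → S' ∈ prodAlgebra Fa →
      Disjoint S S' → μ (S ∪ S') = μ S + μ S')
    (hν : ∀ ⦃S S' : Set (∀ i, A i)⦄, S ∈ prodAlgebra Fa → S' ∈ prodAlgebra Fa →
      Disjoint S S' → ν (S ∪ S') = ν S + ν S')
    (hrect : ∀ B : ∀ i, Set (A i), (∀ i, B i ∈ (Fa i).sets) →
      μ (Set.univ.pi B) = ν (Set.univ.pi B))
    {S : Set (∀ i, A i)} (hS : S ∈ prodAlgebra Fa) : μ S = ν S := by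
  obtain ⟨P, h1, h2, h3, Q, hQ, rfl⟩ := prodAlgebra_partition Fa hS
  have hmem : ∀ R ∈ Q, R ∈ prodAlgebra Fa := fun R hR => by
    obtain ⟨B, hB, rfl⟩ := h1 R (hQ hR)
    exact rect_mem Fa hB
  have hdisj : ∀ R ∈ Q, ∀ R' ∈ Q, R ≠ R' → Disjoint R R' :=
    fun R hR R' hR' => h2 R (hQ hR) R' (hQ hR')
  rw [additive_sum Fa hμ Q hmem hdisj, additive_sum Fa hν Q hmem hdisj]
  refine Finset.sum_congr rfl fun R hR => ?_
  obtain ⟨B, hB, rfl⟩ := h1 R (hQ hR)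
  exact hrect B hB

end ExtAux


namespace ExtAux

variable {T : Type*} {Λ : T → Type*} {F : ∀ t, SetAlgebra (Λ t)}

/-- The rectangle sides of the pullback of a rectangle along a reindexing map. -/
def pullSet {m n : ℕ} (u : Fin m → T) (e : Fin n → Fin m)
    (B : ∀ i, Set (Λ (u (e i)))) : ∀ j, Set (Λ (u j)) :=
  fun j => {a | ∀ i, ∀ h : e i = j, cast (congrArg (fun k => Λ (u k)) h.symm) a ∈ B i}

theorem pullSet_apply {m n : ℕ} (u : Fin m → T) {e : Fin n → Fin m}
    (he : Function.Injective e) (B : ∀ i, Set (Λ (u (e i)))) (i : Fin n) :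
    pullSet u e B (e i) = B i := by
  ext a
  simp only [pullSet, Set.mem_setOf_eq]
  constructor
  · intro h
    exact h i rfl
  · intro h i' hi'
    have hii : i' = i := he hi'
    subst hii
    rw [cast_eq]
    exact h

theorem pullSet_not_range {m n : ℕ} (u : Fin m → T) (e : Fin n → Fin m)
    (B : ∀ i, Set (Λ (u (e i)))) {j : Fin m} (hj : ∀ i, e i ≠ j) :
    pullSet u e B j = Set.univ := by
  ext a
  simp only [pullSet, Set.mem_setOf_eq, Set.mem_univ, iff_true]
  intro i h
  exact absurd h (hj i)

theorem pullSet_mem {m n : ℕ} (u : Fin m → T) {e : Fin n → Fin m}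
    (he : Function.Injective e) {B : ∀ i, Set (Λ (u (e i)))}
    (hB : ∀ i, B i ∈ (F (u (e i))).sets) (j : Fin m) :
    pullSet u e B j ∈ (F (u j)).sets := by
  by_cases h : ∃ i, e i = j
  · obtain ⟨i, rfl⟩ := h
    rw [pullSet_apply u he]
    exact hB i
  · push_neg at h
    rw [pullSet_not_range u e B h]
    exact (F (u j)).univ_mem

theorem pull_rect {m n : ℕ} (u : Fin m → T) (e : Fin n → Fin m)
    (B : ∀ i, Set (Λ (u (e i)))) :
    {x : ∀ j, Λ (u j) | (fun i => x (e i)) ∈ Set.univ.pi B} = Set.univ.pi (pullSet u e B) := by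
  ext x
  simp only [Set.mem_setOf_eq, Set.mem_univ_pi, pullSet]
  constructor
  · intro h j i hij
    subst hij
    exact h i
  · intro h i
    exact h (e i) i rfl

theorem pull_mem {m n : ℕ} (u : Fin m → T) {e : Fin n → Fin m}
    (he : Function.Injective e) {Fs : Set (∀ i, Λ (u (e i)))}
    (hFs : Fs ∈ prodAlgebra (fun i => F (u (e i)))) :
    {x : ∀ j, Λ (u j) | (fun i => x (e i)) ∈ Fs} ∈ prodAlgebra (fun j => F (u j)) := by
  induction hFs with
  | @basic R hR =>
      obtain ⟨B, hB, rfl⟩ := hR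
      rw [pull_rect]
      exact rect_mem _ (pullSet_mem u he hB)
  | univ =>
      have : {x : ∀ j, Λ (u j) | (fun i => x (e i)) ∈ (Set.univ : Set (∀ i, Λ (u (e i))))}
          = Set.univ := by simp
      rw [this]; exact GenAlg.univ
  | @compl s hs ih =>
      have : {x : ∀ j, Λ (u j) | (fun i => x (e i)) ∈ sᶜ}
          = {x : ∀ j, Λ (u j) | (fun i => x (e i)) ∈ s}ᶜ := rfl
      rw [this]; exact GenAlg.compl ih
  | @union s t hs ht ihs iht =>
      have : {x : ∀ j, Λ (u j) | (fun i => x (e i)) ∈ s ∪ t}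
          = {x : ∀ j, Λ (u j) | (fun i => x (e i)) ∈ s}
            ∪ {x : ∀ j, Λ (u j) | (fun i => x (e i)) ∈ t} := rfl
      rw [this]; exact GenAlg.union ihs iht

theorem exists_factor {n m : ℕ} (e : Fin n → Fin m) (he : Function.Injective e) :
    ∃ (ι : Fin n → Fin m) (σ : Equiv.Perm (Fin n)), StrictMono ι ∧ e = ι ∘ σ := by
  classical
  set s : Finset (Fin m) := Finset.image e Finset.univ with hs
  have hcard : s.card = n := by
    rw [hs, Finset.card_image_of_injective _ he, Finset.card_univ, Fintype.card_fin]
  set ι : Fin n → Fin m := fun k => (s.orderIsoOfFin hcard k : Fin m) with hι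
  have hmono : StrictMono ι := fun a b hab => by
    exact Subtype.coe_lt_coe.mpr ((s.orderIsoOfFin hcard).strictMono hab)
  set σ' : Fin n → Fin n := fun i => (s.orderIsoOfFin hcard).symm ⟨e i, by simp [hs]⟩ with hσ'
  have hinj : Function.Injective σ' := by
    intro a b hab
    have h2 := congrArg (fun z => ((s.orderIsoOfFin hcard) z : Fin m)) hab
    simp only [hσ', OrderIso.apply_symm_apply] at h2
    exact he h2
  refine ⟨ι, Equiv.ofBijective σ' (Finite.injective_iff_bijective.mp hinj), hmono, ?_⟩
  funext i
  show e i = ((s.orderIsoOfFin hcard) ((s.orderIsoOfFin hcard).symm ⟨e i, by simp [hs]⟩) : Fin m)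
  rw [OrderIso.apply_symm_apply]

end ExtAux

namespace ExtAux

variable {T : Type*} {Λ : T → Type*} {F : ∀ t, SetAlgebra (Λ t)}
variable {H : Type*} [NormedAddCommGroup H] [InnerProductSpace ℂ H] [CompleteSpace H]

theorem key (CF : ConsistentFamily Λ F H) {m n : ℕ} {u : Fin m → T}
    (hu : Function.Injective u) {e : Fin n → Fin m} (he : Function.Injective e)
    {Fs : Set (∀ i, Λ (u (e i)))} (hFs : Fs ∈ prodAlgebra (fun i => F (u (e i)))) :
    CF.M u {x : ∀ j, Λ (u j) | (fun i => x (e i)) ∈ Fs} = CF.M (fun i => u (e i)) Fs := by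
  obtain ⟨ι, σ, hmono, rfl⟩ := exists_factor e he
  have hue : Function.Injective fun i => u ((ι ∘ ⇑σ) i) := fun a b h => he (hu h)
  have huι : Function.Injective fun k => u (ι k) := fun a b h => hmono.injective (hu h)
  refine eq_on_prodAlgebra (fun i => F (u ((ι ∘ ⇑σ) i)))
    (μ := fun G => CF.M u {x : ∀ j, Λ (u j) | (fun i => x ((ι ∘ ⇑σ) i)) ∈ G})
    (ν := fun G => CF.M (fun i => u ((ι ∘ ⇑σ) i)) G) ?_ ?_ ?_ hFs
  · intro S S' hS hS' hd
    have h1 := pull_mem (F := F) u he hS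
    have h2 := pull_mem (F := F) u he hS'
    have hd' : Disjoint {x : ∀ j, Λ (u j) | (fun i => x ((ι ∘ ⇑σ) i)) ∈ S}
        {x : ∀ j, Λ (u j) | (fun i => x ((ι ∘ ⇑σ) i)) ∈ S'} := hd.preimage _
    exact CF.additive u hu h1 h2 hd'
  · intro S S' hS hS' hd
    exact CF.additive _ hue hS hS' hd
  · intro B hB
    rw [pull_rect]
    have hT : ∀ j, pullSet u (ι ∘ ⇑σ) B j ∈ (F (u j)).sets := pullSet_mem u he hB
    have h1 : Set.univ.pi (pullSet u (ι ∘ ⇑σ) B)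
        = {x : ∀ j, Λ (u j) |
            (fun k => x (ι k)) ∈ Set.univ.pi (fun k => pullSet u (ι ∘ ⇑σ) B (ι k))} := by
      ext x
      simp only [Set.mem_univ_pi, Set.mem_setOf_eq]
      constructor
      · intro h k
        exact h (ι k)
      · intro h j
        by_cases hj : ∃ k, ι k = j
        · obtain ⟨k, rfl⟩ := hj
          exact h k
        · push_neg at hj
          have : pullSet u (ι ∘ ⇑σ) B j = Set.univ :=
            pullSet_not_range u _ B (fun i => hj (σ i))
          rw [this]
          trivial
    rw [h1, CF.marginal u hu ι hmono _
      (rect_mem _ (fun k => hT (ι k))),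
      CF.perm (fun k => u (ι k)) huι σ (fun k => pullSet u (ι ∘ ⇑σ) B (ι k))
        (fun k => hT (ι k))]
    have h2 : (fun j => pullSet u (ι ∘ ⇑σ) B (ι (σ j))) = B :=
      funext fun j => pullSet_apply u he B j
    show CF.M (fun i => u (ι (σ i))) (Set.univ.pi fun j => pullSet u (ι ∘ ⇑σ) B (ι (σ j)))
        = CF.M (fun i => u (ι (σ i))) (Set.univ.pi B)
    rw [h2]

end ExtAux

namespace ExtAux

variable {T : Type*} {Λ : T → Type*} {F : ∀ t, SetAlgebra (Λ t)}
variable {H : Type*} [NormedAddCommGroup H] [InnerProductSpace ℂ H] [CompleteSpace H]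

theorem exists_common {n m : ℕ} (t : Fin n → T) (s : Fin m → T) :
    ∃ (M : ℕ) (u : Fin M → T), Function.Injective u ∧
      (∃ e : Fin n → Fin M, t = fun i => u (e i)) ∧
      (∃ f : Fin m → Fin M, s = fun i => u (f i)) := by
  classical
  set S : Finset T := Finset.image t Finset.univ ∪ Finset.image s Finset.univ with hS
  refine ⟨S.card, fun j => (S.equivFin.symm j : T), ?_, ?_, ?_⟩
  · intro a b hab
    exact S.equivFin.symm.injective (Subtype.ext hab)
  · refine ⟨fun i => S.equivFin ⟨t i, by simp [hS]⟩, funext fun i => ?_⟩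
    show t i = (S.equivFin.symm (S.equivFin ⟨t i, by simp [hS]⟩) : T)
    rw [Equiv.symm_apply_apply]
  · refine ⟨fun i => S.equivFin ⟨s i, by simp [hS]⟩, funext fun i => ?_⟩
    show s i = (S.equivFin.symm (S.equivFin ⟨s i, by simp [hS]⟩) : T)
    rw [Equiv.symm_apply_apply]

theorem proj_surjective [∀ a, Nonempty (Λ a)] {M : ℕ} (u : Fin M → T)
    (hu : Function.Injective u) :
    Function.Surjective fun (x : ∀ a, Λ a) (j : Fin M) => x (u j) := by
  classical
  intro y
  refine ⟨fun a => if h : ∃ j, u j = a then cast (congrArg Λ h.choose_spec) (y h.choose)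
    else Classical.arbitrary _, ?_⟩
  funext j
  have hj : ∃ j', u j' = u j := ⟨j, rfl⟩
  simp only [dif_pos hj]
  have haux : ∀ (j' : Fin M) (hh : u j' = u j), cast (congrArg Λ hh) (y j') = y j := by
    intro j' hh
    have h1 : j' = j := hu hh
    subst h1
    exact cast_eq _ _
  exact haux hj.choose hj.choose_spec

theorem welldef [∀ a, Nonempty (Λ a)] (CF : ConsistentFamily Λ F H) {n m : ℕ}
    {t : Fin n → T} {s : Fin m → T} (ht : Function.Injective t) (hs : Function.Injective s)
    {Fs : Set (∀ j, Λ (t j))} {Gs : Set (∀ j, Λ (s j))}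
    (hFs : Fs ∈ prodAlgebra fun j => F (t j)) (hGs : Gs ∈ prodAlgebra fun j => F (s j))
    (hEq : (fun (x : ∀ a, Λ a) (j : Fin n) => x (t j)) ⁻¹' Fs
         = (fun (x : ∀ a, Λ a) (j : Fin m) => x (s j)) ⁻¹' Gs) :
    CF.M t Fs = CF.M s Gs := by
  obtain ⟨M, u, huinj, ⟨e, rfl⟩, ⟨f, rfl⟩⟩ := exists_common t s
  have he : Function.Injective e := fun a b h => ht (show u (e a) = u (e b) by rw [h])
  have hf : Function.Injective f := fun a b h => hs (show u (f a) = u (f b) by rw [h])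
  have hpe : {y : ∀ j, Λ (u j) | (fun i => y (e i)) ∈ Fs}
      = {y : ∀ j, Λ (u j) | (fun i => y (f i)) ∈ Gs} := by
    apply (proj_surjective u huinj).preimage_injective
    exact hEq
  calc CF.M (fun i => u (e i)) Fs
      = CF.M u {y : ∀ j, Λ (u j) | (fun i => y (e i)) ∈ Fs} := (key CF huinj he hFs).symm
    _ = CF.M u {y : ∀ j, Λ (u j) | (fun i => y (f i)) ∈ Gs} := by rw [hpe]
    _ = CF.M (fun i => u (f i)) Gs := key CF huinj hf hGs

end ExtAux

/-- **extension theorem.** For a consistent family of normalized finitely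
additive `L(H)`-valued measures there exists a unique normalized finitely additive
`L(H)`-valued measure `𝕄` on the algebra `A_Λ` of cylinder sets of `Λ = Π_{t∈T} Λ_t`
such that `𝕄(π_{(t₁,…,tₙ)}⁻¹(F)) = M_{(t₁,…,tₙ)}(F)` for all finite tuples of distinct
indices and all `F` in the corresponding product algebra. -/
theorem consistentFamily_extension
    {H : Type*} [NormedAddCommGroup H] [InnerProductSpace ℂ H] [CompleteSpace H]
    {T : Type*} [Nonempty T] {Λ : T → Type*} [∀ t, Nonempty (Λ t)]
    {F : ∀ t, SetAlgebra (Λ t)} (CF : ConsistentFamily Λ F H) :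
    ∃ 𝕄 : Set (∀ t, Λ t) → (H →L[ℂ] H),
      𝕄 Set.univ = 1 ∧
      (∀ ⦃A B : Set (∀ t, Λ t)⦄, A ∈ cylinderSets Λ F → B ∈ cylinderSets Λ F →
        Disjoint A B → 𝕄 (A ∪ B) = 𝕄 A + 𝕄 B) ∧
      (∀ (n : ℕ) (t : Fin n → T), Function.Injective t →
        ∀ Fs ∈ prodAlgebra (fun j => F (t j)),
          𝕄 ((fun (x : ∀ s, Λ s) (j : Fin n) => x (t j)) ⁻¹' Fs) = CF.M t Fs) ∧
      (∀ 𝕄' : Set (∀ t, Λ t) → (H →L[ℂ] H),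
        𝕄' Set.univ = 1 →
        (∀ ⦃A B : Set (∀ t, Λ t)⦄, A ∈ cylinderSets Λ F → B ∈ cylinderSets Λ F →
          Disjoint A B → 𝕄' (A ∪ B) = 𝕄' A + 𝕄' B) →
        (∀ (n : ℕ) (t : Fin n → T), Function.Injective t →
          ∀ Fs ∈ prodAlgebra (fun j => F (t j)),
            𝕄' ((fun (x : ∀ s, Λ s) (j : Fin n) => x (t j)) ⁻¹' Fs) = CF.M t Fs) →
        ∀ A ∈ cylinderSets Λ F, 𝕄' A = 𝕄 A) := by
  classical
  set 𝕄 : Set (∀ t, Λ t) → (H →L[ℂ] H) := fun A =>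
    if h : A ∈ cylinderSets Λ F then
      CF.M h.choose_spec.choose h.choose_spec.choose_spec.2.choose
    else 0 with h𝕄
  have h3 : ∀ (n : ℕ) (t : Fin n → T), Function.Injective t →
      ∀ Fs ∈ prodAlgebra (fun j => F (t j)),
        𝕄 ((fun (x : ∀ s, Λ s) (j : Fin n) => x (t j)) ⁻¹' Fs) = CF.M t Fs := by
    intro n t ht Fs hFs
    have hA : ((fun (x : ∀ s, Λ s) (j : Fin n) => x (t j)) ⁻¹' Fs) ∈ cylinderSets Λ F :=
      ⟨n, t, ht, Fs, hFs, rfl⟩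
    simp only [h𝕄]
    rw [dif_pos hA]
    exact ExtAux.welldef CF hA.choose_spec.choose_spec.1 ht
      hA.choose_spec.choose_spec.2.choose_spec.1 hFs
      hA.choose_spec.choose_spec.2.choose_spec.2.symm
  refine ⟨𝕄, ?_, ?_, h3, ?_⟩
  · have h0 := h3 0 Fin.elim0 (fun a _ _ => a.elim0) Set.univ GenAlg.univ
    rw [Set.preimage_univ] at h0
    rw [h0, CF.normalized Fin.elim0 (fun a _ _ => a.elim0)]
  · intro A B hA hB hd
    obtain ⟨n, t, ht, Fs, hFs, rfl⟩ := hA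
    obtain ⟨m, s, hs, Gs, hGs, rfl⟩ := hB
    obtain ⟨M, u, huinj, ⟨e, rfl⟩, ⟨f, rfl⟩⟩ := ExtAux.exists_common t s
    have he : Function.Injective e := fun a b h => ht (show u (e a) = u (e b) by rw [h])
    have hf : Function.Injective f := fun a b h => hs (show u (f a) = u (f b) by rw [h])
    have hmA : {y : ∀ j, Λ (u j) | (fun i => y (e i)) ∈ Fs} ∈ prodAlgebra (fun j => F (u j)) :=
      ExtAux.pull_mem u he hFs
    have hmB : {y : ∀ j, Λ (u j) | (fun i => y (f i)) ∈ Gs} ∈ prodAlgebra (fun j => F (u j)) :=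
      ExtAux.pull_mem u hf hGs
    have hd' : Disjoint {y : ∀ j, Λ (u j) | (fun i => y (e i)) ∈ Fs}
        {y : ∀ j, Λ (u j) | (fun i => y (f i)) ∈ Gs} := by
      rw [Set.disjoint_left]
      intro z hz hz'
      obtain ⟨x, rfl⟩ := ExtAux.proj_surjective u huinj z
      exact Set.disjoint_left.mp hd hz hz'
    have key1 : (fun (x : ∀ a, Λ a) (j : Fin n) => x ((fun i => u (e i)) j)) ⁻¹' Fs
        = (fun (x : ∀ a, Λ a) (j : Fin M) => x (u j)) ⁻¹'
            {y : ∀ j, Λ (u j) | (fun i => y (e i)) ∈ Fs} := rfl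
    have key2 : (fun (x : ∀ a, Λ a) (j : Fin m) => x ((fun i => u (f i)) j)) ⁻¹' Gs
        = (fun (x : ∀ a, Λ a) (j : Fin M) => x (u j)) ⁻¹'
            {y : ∀ j, Λ (u j) | (fun i => y (f i)) ∈ Gs} := rfl
    rw [key1, key2, ← Set.preimage_union,
      h3 M u huinj _ (GenAlg.union hmA hmB),
      h3 M u huinj _ hmA, h3 M u huinj _ hmB,
      CF.additive u huinj hmA hmB hd']
  · intro 𝕄' hnorm hadd hproj A hA
    obtain ⟨n, t, ht, Fs, hFs, rfl⟩ := hA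
    rw [hproj n t ht Fs hFs, h3 n t ht Fs hFs]
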